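/- If a sequence of maps φ = (φ_d : 𝔛(ℝ^{d}) → 𝔛(ℝ^{d}))_d is Grassmann-equivariant, then it is decoupling: for all smooth vector fields f₁ on ℝ^{d₁} and f₂ on ℝ^{d₂}, φ_{d₁+d₂}(f₁ ⊕ f₂) = φ_{d₁}(f₁) ⊕ φ_{d₂}(f₂), where (f₁ ⊕ f₂)(x,y) = (f₁(x), f₂(y)). -/
import Mathlib


open Matrix

/-- Direct sum of vector fields: `(f₁ ⊕ f₂)(x, y) = (f₁ x, f₂ y)`. -/
def oplusField (d₁ d₂ : ℕ) (f₁ : (Fin d₁ → ℝ) → Fin d₁ → ℝ)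
    (f₂ : (Fin d₂ → ℝ) → Fin d₂ → ℝ) : (Fin (d₁ + d₂) → ℝ) → Fin (d₁ + d₂) → ℝ :=
  fun x => Fin.append (f₁ fun i => x (Fin.castAdd d₂ i)) (f₂ fun j => x (Fin.natAdd d₁ j))

/-- Selection matrix from an injective index map. -/
def selMat {m n : ℕ} (ι : Fin m → Fin n) : Matrix (Fin m) (Fin n) ℝ :=
  Matrix.of fun i j => if ι i = j then 1 else 0

lemma selMat_mulVec {m n : ℕ} (ι : Fin m → Fin n) (x : Fin n → ℝ) :
    (selMat ι).mulVec x = fun i => x (ι i) := by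
  funext i
  simp [selMat, Matrix.mulVec, dotProduct]

lemma selMat_orth {m n : ℕ} (ι : Fin m → Fin n) (hι : Function.Injective ι) :
    selMat ι * (selMat ι)ᵀ = 1 := by
  ext i k
  simp only [selMat, Matrix.mul_apply, Matrix.transpose_apply, Matrix.of_apply,
    Matrix.one_apply]
  rw [show (∑ x : Fin n, (if ι i = x then (1:ℝ) else 0) * if ι k = x then 1 else 0)
      = ∑ x : Fin n, if ι i = x then (if ι k = x then (1:ℝ) else 0) else 0 from by
    refine Finset.sum_congr rfl fun x _ => ?_; split <;> simp]
  rw [Finset.sum_ite_eq]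
  simp [hι.eq_iff, eq_comm]

/-- A Grassmann-equivariant sequence of maps on vector fields is
decoupling: `φ_{d₁+d₂}(f₁ ⊕ f₂) = φ_{d₁}(f₁) ⊕ φ_{d₂}(f₂)`. -/
theorem grassmann_equivariant_is_decoupling
    (φ : ∀ d : ℕ, ((Fin d → ℝ) → Fin d → ℝ) → (Fin d → ℝ) → Fin d → ℝ)
    (hG : ∀ (d₁ d₂ : ℕ) (A : Matrix (Fin d₂) (Fin d₁) ℝ) (b : Fin d₂ → ℝ),
      A * Aᵀ = 1 →
      ∀ (f₁ : (Fin d₁ → ℝ) → Fin d₁ → ℝ) (f₂ : (Fin d₂ → ℝ) → Fin d₂ → ℝ),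
        (∀ x, f₂ (A.mulVec x + b) = A.mulVec (f₁ x)) →
        ∀ x, φ d₂ f₂ (A.mulVec x + b) = A.mulVec (φ d₁ f₁ x)) :
    ∀ (d₁ d₂ : ℕ) (f₁ : (Fin d₁ → ℝ) → Fin d₁ → ℝ) (f₂ : (Fin d₂ → ℝ) → Fin d₂ → ℝ),
      φ (d₁ + d₂) (oplusField d₁ d₂ f₁ f₂)
        = oplusField d₁ d₂ (φ d₁ f₁) (φ d₂ f₂) := by
  intro d₁ d₂ f₁ f₂
  set F := oplusField d₁ d₂ f₁ f₂ with hF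
  -- first projection
  have h1 := hG (d₁ + d₂) d₁ (selMat (Fin.castAdd d₂)) 0
    (selMat_orth _ (fun a b h => by simpa [Fin.ext_iff] using congrArg Fin.val h)) F f₁
  have h2 := hG (d₁ + d₂) d₂ (selMat (Fin.natAdd d₁)) 0
    (selMat_orth _ (fun a b h => by simpa [Fin.ext_iff] using congrArg Fin.val h)) F f₂
  have e1 : ∀ x, f₁ ((selMat (Fin.castAdd d₂)).mulVec x + 0)
      = (selMat (Fin.castAdd d₂)).mulVec (F x) := by
    intro x
    rw [selMat_mulVec, selMat_mulVec, add_zero]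
    funext i
    simp [hF, oplusField, Fin.append_left]
  have e2 : ∀ x, f₂ ((selMat (Fin.natAdd d₁)).mulVec x + 0)
      = (selMat (Fin.natAdd d₁)).mulVec (F x) := by
    intro x
    rw [selMat_mulVec, selMat_mulVec, add_zero]
    funext j
    simp [hF, oplusField, Fin.append_right]
  have h1' := h1 e1
  have h2' := h2 e2
  funext x k
  have h1x := congrFun (h1' x)
  have h2x := congrFun (h2' x)
  simp only [selMat_mulVec, add_zero] at h1x h2x
  refine Fin.addCases (motive := fun k => φ (d₁ + d₂) F x k
      = oplusField d₁ d₂ (φ d₁ f₁) (φ d₂ f₂) x k) ?_ ?_ k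
  · intro i
    simp only [oplusField, Fin.append_left]
    exact (h1x i).symm
  · intro j
    simp only [oplusField, Fin.append_right]
    exact (h2x j).symm
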